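/- Let n ≥ 2, let z ∈ ℝⁿ, and let S be the unit sphere centered at z. Suppose u : ℝⁿ → ℝ is C² on an open neighborhood U of a point p ∈ S, and suppose the Neumann condition ⟨∇u(x), x − z⟩ = 0 holds for every x ∈ S ∩ U. Then the directional derivative of the function x ↦ ‖∇u(x)‖² at p in the direction of the inward unit normal ν = −(p − z) equals 2‖∇u(p)‖²; that is, D(‖∇u‖²)(p)[z − p] = 2‖∇u(p)‖². -/

import Mathlib

open scoped RealInnerProductSpace
open InnerProductSpace

set_option maxHeartbeats 1000000 in
/-- Lemma 2.2: let `S` be the unit sphere centered at `z ∈ ℝⁿ`, let `u` be `C²` on an open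
neighborhood `U` of a point `p ∈ S`, and suppose the Neumann condition
`⟨∇u(x), x − z⟩ = 0` holds for all `x ∈ S ∩ U`. Then the derivative of `‖∇u‖²` at `p` in
the direction of the inward unit normal `ν = −(p − z) = z − p` equals `2‖∇u(p)‖²`. -/
theorem normal_deriv_grad_sq_on_sphere (n : ℕ) (hn : 2 ≤ n)
    (z p : EuclideanSpace ℝ (Fin n)) (hp : ‖p - z‖ = 1)
    (U : Set (EuclideanSpace ℝ (Fin n))) (hU : IsOpen U) (hpU : p ∈ U)
    (u : EuclideanSpace ℝ (Fin n) → ℝ) (hu : ContDiffOn ℝ 2 u U)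
    (hNeu : ∀ x ∈ U, ‖x - z‖ = 1 → ⟪gradient u x, x - z⟫ = 0) :
    fderiv ℝ (fun x => ‖gradient u x‖ ^ 2) p (z - p) = 2 * ‖gradient u p‖ ^ 2 := by
  set g : EuclideanSpace ℝ (Fin n) → EuclideanSpace ℝ (Fin n) := gradient u with hgdef
  have hUp : U ∈ nhds p := hU.mem_nhds hpU
  have hu2 : ContDiffAt ℝ 2 u p := hu.contDiffAt hUp
  have hf1 : ContDiffAt ℝ 1 (fderiv ℝ u) p := hu2.fderiv_right (by norm_num)
  have hg1 : ContDiffAt ℝ 1 g p := by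
    have : g = fun x => (toDual ℝ (EuclideanSpace ℝ (Fin n))).symm (fderiv ℝ u x) := rfl
    rw [this]
    exact ((toDual ℝ (EuclideanSpace ℝ (Fin n))).symm.contDiff.contDiffAt).comp p hf1
  have hgd : DifferentiableAt ℝ g p := hg1.differentiableAt one_ne_zero
  set B : EuclideanSpace ℝ (Fin n) →L[ℝ] EuclideanSpace ℝ (Fin n) := fderiv ℝ g p with hBdef
  have hB : HasFDerivAt g B p := hgd.hasFDerivAt
  set f'' := fderiv ℝ (fderiv ℝ u) p with hf''def
  have hf'' : HasFDerivAt (fderiv ℝ u) f'' p := (hf1.differentiableAt one_ne_zero).hasFDerivAt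
  have hev : ∀ᶠ y in nhds p, HasFDerivAt u (fderiv ℝ u y) y := by
    filter_upwards [hU.eventually_mem hpU] with y hy
    exact ((hu.contDiffAt (hU.mem_nhds hy)).differentiableAt (by norm_num)).hasFDerivAt
  -- relate B to the second derivative of u
  have hBf : ∀ v w, ⟪B v, w⟫ = f'' v w := by
    intro v w
    have h1 : HasFDerivAt (fun x => fderiv ℝ u x w)
        ((ContinuousLinearMap.apply ℝ ℝ w).comp f'') p :=
      (ContinuousLinearMap.apply ℝ ℝ w).hasFDerivAt.comp p hf''
    have h2 : HasFDerivAt (fun x => ⟪g x, w⟫)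
        ((fderivInnerCLM ℝ (g p, w)).comp (B.prod (0 : _ →L[ℝ] _))) p := by
      have := hB.inner ℝ (hasFDerivAt_const w p)
      exact this
    have heq : (fun x => ⟪g x, w⟫) = fun x => fderiv ℝ u x w := by
      funext x
      exact toDual_symm_apply
    rw [heq] at h2
    have := h1.unique h2
    have hv := congrFun (congrArg DFunLike.coe this) v
    simp only [ContinuousLinearMap.comp_apply, ContinuousLinearMap.apply_apply,
      ContinuousLinearMap.prod_apply, ContinuousLinearMap.zero_apply,
      fderivInnerCLM_apply] at hv
    simp only [inner_zero_right, add_zero] at hv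
    linarith [hv]
  have hsymm : ∀ v w, ⟪B v, w⟫ = ⟪B w, v⟫ := by
    intro v w
    rw [hBf v w, hBf w v]
    exact second_derivative_symmetric_of_eventually hev hf'' v w
  -- the Neumann function and its derivative
  have hid : HasFDerivAt (fun x : EuclideanSpace ℝ (Fin n) => x - z)
      (ContinuousLinearMap.id ℝ (EuclideanSpace ℝ (Fin n))) p := by
    simpa using (hasFDerivAt_id p).sub_const z
  have hh := hB.inner ℝ hid
  have hgp : ⟪g p, p - z⟫ = 0 := hNeu p hpU hp
  have hkey : ⟪B (g p), z - p⟫ = ‖g p‖ ^ 2 := by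
    rcases eq_or_ne (g p) 0 with h0 | h0
    · simp [h0]
    · set w : EuclideanSpace ℝ (Fin n) := ‖g p‖⁻¹ • g p with hw
      have hgpn : ‖g p‖ ≠ 0 := norm_ne_zero_iff.mpr h0
      have hwpz : ⟪w, p - z⟫ = 0 := by
        rw [hw, real_inner_smul_left, hgp, mul_zero]
      have hwn : ‖w‖ = 1 := by
        rw [hw, norm_smul, norm_inv, norm_norm, inv_mul_cancel₀ hgpn]
      set γ : ℝ → EuclideanSpace ℝ (Fin n) :=
        fun t => z + (Real.cos t • (p - z) + Real.sin t • w) with hγ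
      have hγ0 : γ 0 = p := by simp [hγ]
      have hγS : ∀ t, ‖γ t - z‖ = 1 := by
        intro t
        have he : γ t - z = Real.cos t • (p - z) + Real.sin t • w := by
          simp only [hγ]; abel
        have hwpz' : ⟪p - z, w⟫ = 0 := by rw [real_inner_comm]; exact hwpz
        have hsq : ‖γ t - z‖ ^ 2 = 1 := by
          rw [he, norm_add_sq_real, real_inner_smul_left, real_inner_smul_right,
            norm_smul, norm_smul, hwpz']
          simp only [mul_zero, Real.norm_eq_abs, hp, hwn, mul_one, add_zero, sq_abs]
          linarith [Real.sin_sq_add_cos_sq t]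
        nlinarith [norm_nonneg (γ t - z), hsq]
      have hγc : Continuous γ := by
        exact continuous_const.add ((Real.continuous_cos.smul continuous_const).add
          (Real.continuous_sin.smul continuous_const))
      have hγU : ∀ᶠ t in nhds (0 : ℝ), γ t ∈ U := by
        have : γ ⁻¹' U ∈ nhds (0 : ℝ) := by
          apply hγc.continuousAt.preimage_mem_nhds
          rw [hγ0]; exact hUp
        exact this
      have hev0 : (fun t => ⟪g (γ t), γ t - z⟫) =ᶠ[nhds (0 : ℝ)] fun _ => 0 := by
        filter_upwards [hγU] with t ht
        exact hNeu (γ t) ht (hγS t)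
      have hγd : HasDerivAt γ w 0 := by
        have h1 : HasDerivAt (fun t : ℝ => Real.cos t • (p - z))
            ((-Real.sin 0) • (p - z)) 0 := (Real.hasDerivAt_cos 0).smul_const (p - z)
        have h2 : HasDerivAt (fun t : ℝ => Real.sin t • w) ((Real.cos 0) • w) 0 :=
          (Real.hasDerivAt_sin 0).smul_const w
        have := (h1.add h2).const_add z
        simpa [hγ] using this
      have hh' : HasFDerivAt (fun t => ⟪g t, t - z⟫)
          ((fderivInnerCLM ℝ (g p, p - z)).comp
            (B.prod (ContinuousLinearMap.id ℝ (EuclideanSpace ℝ (Fin n))))) (γ 0) := by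
        rw [hγ0]; exact hh
      have hcomp : HasDerivAt (fun t => ⟪g (γ t), γ t - z⟫)
          (((fderivInnerCLM ℝ (g p, p - z)).comp
            (B.prod (ContinuousLinearMap.id ℝ (EuclideanSpace ℝ (Fin n))))) w) 0 :=
        hh'.comp_hasDerivAt 0 hγd
      have hz : HasDerivAt (fun _ : ℝ => (0 : ℝ))
          (((fderivInnerCLM ℝ (g p, p - z)).comp
            (B.prod (ContinuousLinearMap.id ℝ (EuclideanSpace ℝ (Fin n))))) w) 0 :=
        hcomp.congr_of_eventuallyEq hev0.symm
      have hc0 : ((fderivInnerCLM ℝ (g p, p - z)).comp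
          (B.prod (ContinuousLinearMap.id ℝ (EuclideanSpace ℝ (Fin n))))) w = 0 :=
        hz.unique (hasDerivAt_const 0 0)
      have hw0 : ⟪g p, w⟫ + ⟪B w, p - z⟫ = 0 := by
        simpa only [ContinuousLinearMap.comp_apply, ContinuousLinearMap.prod_apply,
          ContinuousLinearMap.id_apply, fderivInnerCLM_apply] using hc0
      have hBw : ⟪B w, p - z⟫ = ‖g p‖⁻¹ * ⟪B (g p), p - z⟫ := by
        rw [hw]; rw [map_smul]; rw [real_inner_smul_left]
      have hgw : ⟪g p, w⟫ = ‖g p‖ := by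
        rw [hw, real_inner_smul_right, real_inner_self_eq_norm_sq]
        field_simp
      rw [hgw, hBw] at hw0
      have hfin : ⟪B (g p), p - z⟫ = -‖g p‖ ^ 2 := by
        have h1 : ‖g p‖ * (‖g p‖ + ‖g p‖⁻¹ * ⟪B (g p), p - z⟫) = ‖g p‖ * 0 := by
          rw [hw0]
        rw [mul_zero, mul_add, ← mul_assoc, mul_inv_cancel₀ hgpn, one_mul] at h1
        nlinarith [h1]
      have hzp : (z - p : EuclideanSpace ℝ (Fin n)) = -(p - z) := by abel
      rw [hzp, inner_neg_right, hfin, neg_neg]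
  -- compute the derivative of ‖g‖²
  have hsq : HasFDerivAt (fun x => ‖g x‖ ^ 2)
      ((fderivInnerCLM ℝ (g p, g p)).comp (B.prod B)) p := by
    have h := hB.inner ℝ hB
    have heq : (fun x => ⟪g x, g x⟫) = fun x => ‖g x‖ ^ 2 := by
      funext x; rw [real_inner_self_eq_norm_sq]
    rwa [heq] at h
  rw [hsq.fderiv]
  have hval : ((fderivInnerCLM ℝ (g p, g p)).comp (B.prod B)) (z - p)
      = ⟪g p, B (z - p)⟫ + ⟪B (z - p), g p⟫ := by
    simp only [ContinuousLinearMap.comp_apply, ContinuousLinearMap.prod_apply,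
      fderivInnerCLM_apply]
  rw [hval]
  have h1 : ⟪g p, B (z - p)⟫ = ⟪B (z - p), g p⟫ := real_inner_comm _ _
  rw [h1, hsymm (z - p) (g p), hkey]
  ring
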